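/- Let X be a coalgebra and let 𝒳 = (X; ·, ⊥) be a left regular q-magma coalgebra. Define s : X⊗X → X⊗X by s(x⊗y) := ^{x_(2)}y_(2) ⊗ x_(1)^{y_(1)}, where x^y := (id⊗ε)(Ḡ^{-1}(x⊗y)) and ˣy := y_(2) ⊥ x^{y_(1)}. Then s is a left non-degenerate coalgebra endomorphism of X⊗X. -/

import Mathlib

open TensorProduct

noncomputable section

variable (k : Type) [Field k] (X : Type) [AddCommGroup X] [Module k X] [Coalgebra k X]

/-- x ⊗ y ↦ ε(y) x -/
def cE : X ⊗[k] X →ₗ[k] X :=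
  (TensorProduct.rid k X).toLinearMap ∘ₗ LinearMap.lTensor X (Coalgebra.counit (R := k))

/-- x ⊗ y ↦ ε(x) y -/
def cE' : X ⊗[k] X →ₗ[k] X :=
  (TensorProduct.lid k X).toLinearMap ∘ₗ LinearMap.rTensor X (Coalgebra.counit (R := k))

/-- first Sweedler component of a morphism `X⊗X → X⊗X` -/
def comp1 (s : X ⊗[k] X →ₗ[k] X ⊗[k] X) : X ⊗[k] X →ₗ[k] X := cE k X ∘ₗ s

/-- second Sweedler component of a morphism `X⊗X → X⊗X` -/
def comp2 (s : X ⊗[k] X →ₗ[k] X ⊗[k] X) : X ⊗[k] X →ₗ[k] X := cE' k X ∘ₗ s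

/-- `Gmap f (x ⊗ y) = f (x ⊗ y₍₁₎) ⊗ y₍₂₎` -/
def Gmap (f : X ⊗[k] X →ₗ[k] X) : X ⊗[k] X →ₗ[k] X ⊗[k] X :=
  TensorProduct.map f LinearMap.id ∘ₗ (TensorProduct.assoc k X X X).symm.toLinearMap ∘ₗ
    LinearMap.lTensor X (Coalgebra.comul (R := k))

/-- comultiplication of `X^cop` -/
def comulCop : X →ₗ[k] X ⊗[k] X :=
  (TensorProduct.comm k X X).toLinearMap ∘ₗ Coalgebra.comul (R := k)

/-- `GmapCop f (x ⊗ y) = f (x ⊗ y₍₂₎) ⊗ y₍₁₎` -/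
def GmapCop (f : X ⊗[k] X →ₗ[k] X) : X ⊗[k] X →ₗ[k] X ⊗[k] X :=
  TensorProduct.map f LinearMap.id ∘ₗ (TensorProduct.assoc k X X X).symm.toLinearMap ∘ₗ
    LinearMap.lTensor X (comulCop k X)

/-- comultiplication of `X ⊗ X` -/
def comulT : X ⊗[k] X →ₗ[k] (X ⊗[k] X) ⊗[k] (X ⊗[k] X) :=
  (TensorProduct.tensorTensorTensorComm k X X X X).toLinearMap ∘ₗ
    TensorProduct.map (Coalgebra.comul (R := k)) (Coalgebra.comul (R := k))

/-- comultiplication of `X ⊗ X^cop` -/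
def comulTCop : X ⊗[k] X →ₗ[k] (X ⊗[k] X) ⊗[k] (X ⊗[k] X) :=
  (TensorProduct.tensorTensorTensorComm k X X X X).toLinearMap ∘ₗ
    TensorProduct.map (Coalgebra.comul (R := k)) (comulCop k X)

/-- comultiplication of `X^cop ⊗ X^cop` -/
def comulTcc : X ⊗[k] X →ₗ[k] (X ⊗[k] X) ⊗[k] (X ⊗[k] X) :=
  (TensorProduct.tensorTensorTensorComm k X X X X).toLinearMap ∘ₗ
    TensorProduct.map (comulCop k X) (comulCop k X)

/-- counit of `X ⊗ X` -/
def counitT : X ⊗[k] X →ₗ[k] k :=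
  (TensorProduct.lid k k).toLinearMap ∘ₗ
    TensorProduct.map (Coalgebra.counit (R := k)) (Coalgebra.counit (R := k))

/-- `s : X⊗X → X⊗X` is a coalgebra morphism -/
def IsCoalgEndo (s : X ⊗[k] X →ₗ[k] X ⊗[k] X) : Prop :=
  comulT k X ∘ₗ s = TensorProduct.map s s ∘ₗ comulT k X ∧ counitT k X ∘ₗ s = counitT k X

/-- `f : X⊗X → X` is a coalgebra morphism -/
def IsCoalgMor (f : X ⊗[k] X →ₗ[k] X) : Prop :=
  Coalgebra.comul (R := k) ∘ₗ f = TensorProduct.map f f ∘ₗ comulT k X ∧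
  Coalgebra.counit (R := k) ∘ₗ f = counitT k X

/-- `f : X ⊗ X^cop → X` is a coalgebra morphism -/
def IsCoalgMorCop (f : X ⊗[k] X →ₗ[k] X) : Prop :=
  Coalgebra.comul (R := k) ∘ₗ f = TensorProduct.map f f ∘ₗ comulTCop k X ∧
  Coalgebra.counit (R := k) ∘ₗ f = counitT k X

/-- the operation `x ⊥ y := s₁ ((y·x₍₁₎) ⊗ x₍₂₎)` -/
def dOf (s : X ⊗[k] X →ₗ[k] X ⊗[k] X) (p : X ⊗[k] X →ₗ[k] X) : X ⊗[k] X →ₗ[k] X :=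
  comp1 k X s ∘ₗ Gmap k X p ∘ₗ (TensorProduct.comm k X X).toLinearMap

/-- the operation `⊥` of the endomorphism `s` viewed on `X^cop ⊗ X^cop` -/
def dOfCop (s : X ⊗[k] X →ₗ[k] X ⊗[k] X) (p : X ⊗[k] X →ₗ[k] X) : X ⊗[k] X →ₗ[k] X :=
  comp1 k X s ∘ₗ GmapCop k X p ∘ₗ (TensorProduct.comm k X X).toLinearMap

/-- left non-degeneracy of `s` : `G_s` is invertible -/
def LeftNonDeg (s : X ⊗[k] X →ₗ[k] X ⊗[k] X) : Prop :=
  Function.Bijective (Gmap k X (comp2 k X s))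

/-- `p` is the operation `·` associated with a left non-degenerate `s`, i.e.
`(x·y₍₁₎)^(y₍₂₎) = x^(y₍₁₎)·y₍₂₎ = ε(y)x`. -/
def IsDotOf (s : X ⊗[k] X →ₗ[k] X ⊗[k] X) (p : X ⊗[k] X →ₗ[k] X) : Prop :=
  comp2 k X s ∘ₗ Gmap k X p = cE k X ∧ p ∘ₗ Gmap k X (comp2 k X s) = cE k X

def s12m (s : X ⊗[k] X →ₗ[k] X ⊗[k] X) : (X ⊗[k] X) ⊗[k] X →ₗ[k] (X ⊗[k] X) ⊗[k] X :=
  LinearMap.rTensor X s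

def s23m (s : X ⊗[k] X →ₗ[k] X ⊗[k] X) : (X ⊗[k] X) ⊗[k] X →ₗ[k] (X ⊗[k] X) ⊗[k] X :=
  (TensorProduct.assoc k X X X).symm.toLinearMap ∘ₗ LinearMap.lTensor X s ∘ₗ
    (TensorProduct.assoc k X X X).toLinearMap

/-- the braid equation -/
def IsBraidSol (s : X ⊗[k] X →ₗ[k] X ⊗[k] X) : Prop :=
  s12m k X s ∘ₗ s23m k X s ∘ₗ s12m k X s = s23m k X s ∘ₗ s12m k X s ∘ₗ s23m k X s

/-- the exchange identity `y₍₁₎⊥x₍₂₎ ⊗ x₍₁₎·y₍₂₎ = y₍₂₎⊥x₍₁₎ ⊗ x₍₂₎·y₍₁₎` -/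
def ExchangeId (p d : X ⊗[k] X →ₗ[k] X) : Prop :=
  ∀ (x y : X) (n m : ℕ) (x1 x2 : Fin n → X) (y1 y2 : Fin m → X),
    (∑ i, x1 i ⊗ₜ[k] x2 i) = Coalgebra.comul (R := k) x →
    (∑ j, y1 j ⊗ₜ[k] y2 j) = Coalgebra.comul (R := k) y →
    (∑ i, ∑ j, d (y1 j ⊗ₜ[k] x2 i) ⊗ₜ[k] p (x1 i ⊗ₜ[k] y2 j)) =
      ∑ i, ∑ j, d (y2 j ⊗ₜ[k] x1 i) ⊗ₜ[k] p (x2 i ⊗ₜ[k] y1 j)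

/-- the three q-cycle coalgebra conditions -/
def QCycleConds (p d : X ⊗[k] X →ₗ[k] X) : Prop :=
  ∀ (x y z : X) (n m : ℕ) (y1 y2 : Fin n → X) (z1 z2 : Fin m → X),
    (∑ i, y1 i ⊗ₜ[k] y2 i) = Coalgebra.comul (R := k) y →
    (∑ j, z1 j ⊗ₜ[k] z2 j) = Coalgebra.comul (R := k) z →
    ((∑ i, p (p (x ⊗ₜ[k] y1 i) ⊗ₜ[k] d (z ⊗ₜ[k] y2 i))) =
        ∑ j, p (p (x ⊗ₜ[k] z2 j) ⊗ₜ[k] p (y ⊗ₜ[k] z1 j)) ∧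
     (∑ i, d (p (x ⊗ₜ[k] y1 i) ⊗ₜ[k] p (z ⊗ₜ[k] y2 i))) =
        ∑ j, p (d (x ⊗ₜ[k] z2 j) ⊗ₜ[k] d (y ⊗ₜ[k] z1 j)) ∧
     (∑ i, d (d (x ⊗ₜ[k] y1 i) ⊗ₜ[k] d (z ⊗ₜ[k] y2 i))) =
        ∑ j, d (d (x ⊗ₜ[k] z2 j) ⊗ₜ[k] p (y ⊗ₜ[k] z1 j)))


/-- the left action `ˣy := y₍₂₎ ⊥ x^(y₍₁₎)`, where `g` is the operation `x^y` -/
def bOf (g d : X ⊗[k] X →ₗ[k] X) : X ⊗[k] X →ₗ[k] X :=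
  d ∘ₗ (TensorProduct.comm k X X).toLinearMap ∘ₗ Gmap k X g

/-- the left action `_xy := y₍₁₎ · x_(y₍₂₎)`, where `g'` is the operation `x_y` -/
def uOfCop (g' p : X ⊗[k] X →ₗ[k] X) : X ⊗[k] X →ₗ[k] X :=
  p ∘ₗ (TensorProduct.comm k X X).toLinearMap ∘ₗ GmapCop k X g'

/-- `Hmap f (x ⊗ y) = f (y₍₂₎ ⊗ x) ⊗ y₍₁₎` -/
def Hmap (f : X ⊗[k] X →ₗ[k] X) : X ⊗[k] X →ₗ[k] X ⊗[k] X :=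
  TensorProduct.map f LinearMap.id ∘ₗ (TensorProduct.assoc k X X X).symm.toLinearMap ∘ₗ
    LinearMap.lTensor X (TensorProduct.comm k X X).toLinearMap ∘ₗ
    (TensorProduct.assoc k X X X).toLinearMap ∘ₗ
    LinearMap.rTensor X (comulCop k X) ∘ₗ (TensorProduct.comm k X X).toLinearMap

/-- `HmapCop f (x ⊗ y) = f (y₍₁₎ ⊗ x) ⊗ y₍₂₎` -/
def HmapCop (f : X ⊗[k] X →ₗ[k] X) : X ⊗[k] X →ₗ[k] X ⊗[k] X :=
  TensorProduct.map f LinearMap.id ∘ₗ (TensorProduct.assoc k X X X).symm.toLinearMap ∘ₗ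
    LinearMap.lTensor X (TensorProduct.comm k X X).toLinearMap ∘ₗ
    (TensorProduct.assoc k X X X).toLinearMap ∘ₗ
    LinearMap.rTensor X (Coalgebra.comul (R := k)) ∘ₗ (TensorProduct.comm k X X).toLinearMap

section HelpersA

open Coalgebra

variable {ι κ : Type*}

theorem sum_counit_smul {I : Finset ι} {a b : ι → X} {y : X}
    (h : ∑ i ∈ I, a i ⊗ₜ[k] b i = Coalgebra.comul (R := k) y) :
    ∑ i ∈ I, Coalgebra.counit (R := k) (a i) • b i = y := by
  have := congrArg (TensorProduct.lid k X)
    (congrArg (LinearMap.rTensor X (Coalgebra.counit (R := k))) h)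
  simpa [map_sum] using this

theorem sum_smul_counit {I : Finset ι} {a b : ι → X} {y : X}
    (h : ∑ i ∈ I, a i ⊗ₜ[k] b i = Coalgebra.comul (R := k) y) :
    ∑ i ∈ I, Coalgebra.counit (R := k) (b i) • a i = y := by
  have := congrArg (TensorProduct.rid k X)
    (congrArg (LinearMap.lTensor X (Coalgebra.counit (R := k))) h)
  simpa [map_sum] using this

theorem cE_tmul (x y : X) :
    cE k X (x ⊗ₜ[k] y) = Coalgebra.counit (R := k) y • x := by
  simp [cE]

theorem cE'_tmul (x y : X) :
    cE' k X (x ⊗ₜ[k] y) = Coalgebra.counit (R := k) x • y := by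
  simp [cE']

theorem counitT_tmul (x y : X) :
    counitT k X (x ⊗ₜ[k] y) = Coalgebra.counit (R := k) x * Coalgebra.counit (R := k) y := by
  simp [counitT, smul_eq_mul]

theorem Gmap_tmul (f : X ⊗[k] X →ₗ[k] X) {I : Finset ι} {a b : ι → X} {y : X}
    (h : ∑ i ∈ I, a i ⊗ₜ[k] b i = Coalgebra.comul (R := k) y) (x : X) :
    Gmap k X f (x ⊗ₜ[k] y) = ∑ i ∈ I, f (x ⊗ₜ[k] a i) ⊗ₜ[k] b i := by
  simp [Gmap, ← h, tmul_sum, map_sum]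

theorem comulT_tmul {I : Finset ι} {J : Finset κ} {a b : ι → X} {c e : κ → X} {x y : X}
    (hx : ∑ i ∈ I, a i ⊗ₜ[k] b i = Coalgebra.comul (R := k) x)
    (hy : ∑ j ∈ J, c j ⊗ₜ[k] e j = Coalgebra.comul (R := k) y) :
    comulT k X (x ⊗ₜ[k] y) =
      ∑ i ∈ I, ∑ j ∈ J, (a i ⊗ₜ[k] c j) ⊗ₜ[k] (b i ⊗ₜ[k] e j) := by
  simp [comulT, ← hx, ← hy, sum_tmul, tmul_sum, map_sum]
  rw [Finset.sum_comm]

theorem comulTcc_tmul {I : Finset ι} {J : Finset κ} {a b : ι → X} {c e : κ → X} {x y : X}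
    (hx : ∑ i ∈ I, a i ⊗ₜ[k] b i = Coalgebra.comul (R := k) x)
    (hy : ∑ j ∈ J, c j ⊗ₜ[k] e j = Coalgebra.comul (R := k) y) :
    comulTcc k X (x ⊗ₜ[k] y) =
      ∑ i ∈ I, ∑ j ∈ J, (b i ⊗ₜ[k] e j) ⊗ₜ[k] (a i ⊗ₜ[k] c j) := by
  simp [comulTcc, comulCop, ← hx, ← hy, sum_tmul, tmul_sum, map_sum]
  rw [Finset.sum_comm]

theorem comulTCop_tmul {I : Finset ι} {J : Finset κ} {a b : ι → X} {c e : κ → X} {x y : X}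
    (hx : ∑ i ∈ I, a i ⊗ₜ[k] b i = Coalgebra.comul (R := k) x)
    (hy : ∑ j ∈ J, c j ⊗ₜ[k] e j = Coalgebra.comul (R := k) y) :
    comulTCop k X (x ⊗ₜ[k] y) =
      ∑ i ∈ I, ∑ j ∈ J, (a i ⊗ₜ[k] e j) ⊗ₜ[k] (b i ⊗ₜ[k] c j) := by
  simp [comulTCop, comulCop, ← hx, ← hy, sum_tmul, tmul_sum, map_sum]
  rw [Finset.sum_comm]

theorem bOf_tmul (gm dm : X ⊗[k] X →ₗ[k] X) {I : Finset ι} {a b : ι → X} {x y : X}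
    (hy : ∑ i ∈ I, a i ⊗ₜ[k] b i = Coalgebra.comul (R := k) y) :
    bOf k X gm dm (x ⊗ₜ[k] y) = ∑ i ∈ I, dm (b i ⊗ₜ[k] gm (x ⊗ₜ[k] a i)) := by
  simp [bOf, Gmap_tmul k X gm hy, map_sum]

theorem dsmul₁ (f : X ⊗[k] X →ₗ[k] X) (c : k) (u v w : X) :
    f ((c • u) ⊗ₜ[k] v) ⊗ₜ[k] w = (c • f (u ⊗ₜ[k] v)) ⊗ₜ[k] w := by
  rw [← TensorProduct.smul_tmul', map_smul]

theorem dsmul₂ (f : X ⊗[k] X →ₗ[k] X) (c : k) (u v w : X) :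
    f (u ⊗ₜ[k] (c • v)) ⊗ₜ[k] w = (c • f (u ⊗ₜ[k] v)) ⊗ₜ[k] w := by
  rw [TensorProduct.tmul_smul, map_smul]

end HelpersA
section HelpersB

open Coalgebra

variable {ι κ : Type*}

theorem coassoc3 {W : Type} [AddCommGroup W] [Module k W]
    (M : X ⊗[k] (X ⊗[k] X) →ₗ[k] W) {y : X} (r : Coalgebra.Repr k y (X × X))
    (a₁ : (i : r.ι) → Coalgebra.Repr k (r.left i) (X × X))
    (a₂ : (i : r.ι) → Coalgebra.Repr k (r.right i) (X × X)) :
    ∑ i ∈ r.index, ∑ j ∈ (a₁ i).index,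
      M ((a₁ i).left j ⊗ₜ[k] ((a₁ i).right j ⊗ₜ[k] r.right i)) =
    ∑ i ∈ r.index, ∑ j ∈ (a₂ i).index,
      M (r.left i ⊗ₜ[k] ((a₂ i).left j ⊗ₜ[k] (a₂ i).right j)) := by
  have H := congrArg M (Coalgebra.sum_tmul_tmul_eq r a₁ a₂)
  simpa [map_sum] using H

theorem coassoc4 {W : Type} [AddCommGroup W] [Module k W]
    (M : X ⊗[k] (X ⊗[k] (X ⊗[k] X)) →ₗ[k] W) {y : X} (r : Coalgebra.Repr k y (X × X))
    (a₁ : (i : r.ι) → Coalgebra.Repr k (r.left i) (X × X))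
    (a₂ : (i : r.ι) → Coalgebra.Repr k (r.right i) (X × X))
    (a₃ : (i : r.ι) → (l : (a₂ i).ι) → Coalgebra.Repr k ((a₂ i).left l) (X × X)) :
    ∑ i ∈ r.index, ∑ j ∈ (a₁ i).index, ∑ l ∈ (a₂ i).index,
      M ((a₁ i).left j ⊗ₜ[k] ((a₁ i).right j ⊗ₜ[k] ((a₂ i).left l ⊗ₜ[k] (a₂ i).right l))) =
    ∑ i ∈ r.index, ∑ l ∈ (a₂ i).index, ∑ m ∈ (a₃ i l).index,
      M (r.left i ⊗ₜ[k] ((a₃ i l).left m ⊗ₜ[k] ((a₃ i l).right m ⊗ₜ[k] (a₂ i).right l))) := by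
  have step1 :
      ∑ i ∈ r.index, ∑ j ∈ (a₁ i).index, ∑ l ∈ (a₂ i).index,
        M ((a₁ i).left j ⊗ₜ[k] ((a₁ i).right j ⊗ₜ[k] ((a₂ i).left l ⊗ₜ[k] (a₂ i).right l))) =
      ∑ i ∈ r.index, ∑ j ∈ (a₁ i).index,
        (M ∘ₗ LinearMap.lTensor X (LinearMap.lTensor X (Coalgebra.comul (R := k))))
          ((a₁ i).left j ⊗ₜ[k] ((a₁ i).right j ⊗ₜ[k] r.right i)) := by
    refine Finset.sum_congr rfl fun i _ => Finset.sum_congr rfl fun j _ => ?_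
    simp [← (a₂ i).eq, tmul_sum, map_sum]
  rw [step1, coassoc3 k X (M ∘ₗ LinearMap.lTensor X (LinearMap.lTensor X (Coalgebra.comul (R := k))))
    r a₁ a₂]
  refine Finset.sum_congr rfl fun i _ => ?_
  have inner := coassoc3 k X (M ∘ₗ TensorProduct.mk k X (X ⊗[k] (X ⊗[k] X)) (r.left i))
    (a₂ i) (a₃ i) (fun l => ℛ k ((a₂ i).right l))
  simp only [LinearMap.comp_apply, TensorProduct.mk_apply] at inner
  rw [inner]
  refine Finset.sum_congr rfl fun l _ => ?_
  simp [← (ℛ k ((a₂ i).right l)).eq, tmul_sum, map_sum]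

end HelpersB
section HelpersC

open Coalgebra

variable {ι κ : Type*}

theorem finset_to_fin {M : Type*} [AddCommMonoid M] (I : Finset ι) (f : ι → M) :
    ∑ i ∈ I, f i = ∑ t : Fin I.card, f ((I.equivFin.symm t) : ι) := by
  rw [Equiv.sum_comp I.equivFin.symm (fun i : I => f (i : ι)), Finset.sum_coe_sort]

theorem hg2_sum {p g : X ⊗[k] X →ₗ[k] X} (hg2 : g ∘ₗ Gmap k X p = cE k X)
    {I : Finset ι} {a b : ι → X} {y : X}
    (h : ∑ i ∈ I, a i ⊗ₜ[k] b i = Coalgebra.comul (R := k) y) (z : X) :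
    ∑ i ∈ I, g (p (z ⊗ₜ[k] a i) ⊗ₜ[k] b i) = Coalgebra.counit (R := k) y • z := by
  have H := LinearMap.congr_fun hg2 (z ⊗ₜ[k] y)
  rw [LinearMap.comp_apply, Gmap_tmul k X p h z, cE_tmul] at H
  simpa [map_sum] using H

theorem morCop_comul_sum {f : X ⊗[k] X →ₗ[k] X}
    (hf : Coalgebra.comul (R := k) ∘ₗ f = TensorProduct.map f f ∘ₗ comulTCop k X)
    {I : Finset ι} {J : Finset κ} {a b : ι → X} {c e : κ → X} {x y : X}
    (hx : ∑ i ∈ I, a i ⊗ₜ[k] b i = Coalgebra.comul (R := k) x)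
    (hy : ∑ j ∈ J, c j ⊗ₜ[k] e j = Coalgebra.comul (R := k) y) :
    Coalgebra.comul (R := k) (f (x ⊗ₜ[k] y)) =
      ∑ i ∈ I, ∑ j ∈ J, f (a i ⊗ₜ[k] e j) ⊗ₜ[k] f (b i ⊗ₜ[k] c j) := by
  have H := LinearMap.congr_fun hf (x ⊗ₜ[k] y)
  rw [LinearMap.comp_apply, LinearMap.comp_apply, comulTCop_tmul k X hx hy] at H
  simpa [map_sum] using H

theorem morCop_counit {f : X ⊗[k] X →ₗ[k] X}
    (hf : Coalgebra.counit (R := k) ∘ₗ f = counitT k X) (x y : X) :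
    Coalgebra.counit (R := k) (f (x ⊗ₜ[k] y)) =
      Coalgebra.counit (R := k) x * Coalgebra.counit (R := k) y := by
  have H := LinearMap.congr_fun hf (x ⊗ₜ[k] y)
  rwa [LinearMap.comp_apply, counitT_tmul] at H

theorem smap_tmul (B G : X ⊗[k] X →ₗ[k] X)
    {I : Finset ι} {J : Finset κ} {a b : ι → X} {c e : κ → X} {x y : X}
    (hx : ∑ i ∈ I, a i ⊗ₜ[k] b i = Coalgebra.comul (R := k) x)
    (hy : ∑ j ∈ J, c j ⊗ₜ[k] e j = Coalgebra.comul (R := k) y) :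
    (TensorProduct.map B G ∘ₗ comulTcc k X) (x ⊗ₜ[k] y) =
      ∑ i ∈ I, ∑ j ∈ J, B (b i ⊗ₜ[k] e j) ⊗ₜ[k] G (a i ⊗ₜ[k] c j) := by
  rw [LinearMap.comp_apply, comulTcc_tmul k X hx hy]
  simp [map_sum]

theorem hex_sum {p d : X ⊗[k] X →ₗ[k] X} (hex : ExchangeId k X p d)
    {I : Finset ι} {J : Finset κ} {a b : ι → X} {c e : κ → X} {x y : X}
    (hx : ∑ i ∈ I, a i ⊗ₜ[k] b i = Coalgebra.comul (R := k) x)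
    (hy : ∑ j ∈ J, c j ⊗ₜ[k] e j = Coalgebra.comul (R := k) y) :
    ∑ i ∈ I, ∑ j ∈ J, d (c j ⊗ₜ[k] b i) ⊗ₜ[k] p (a i ⊗ₜ[k] e j) =
    ∑ i ∈ I, ∑ j ∈ J, d (e j ⊗ₜ[k] a i) ⊗ₜ[k] p (b i ⊗ₜ[k] c j) := by
  have hx' : (∑ t : Fin I.card, a ((I.equivFin.symm t) : ι) ⊗ₜ[k] b ((I.equivFin.symm t) : ι))
      = Coalgebra.comul (R := k) x := by
    rw [← hx, finset_to_fin I (fun i => a i ⊗ₜ[k] b i)]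
  have hy' : (∑ t : Fin J.card, c ((J.equivFin.symm t) : κ) ⊗ₜ[k] e ((J.equivFin.symm t) : κ))
      = Coalgebra.comul (R := k) y := by
    rw [← hy, finset_to_fin J (fun j => c j ⊗ₜ[k] e j)]
  have H := hex x y I.card J.card (fun t => a (I.equivFin.symm t)) (fun t => b (I.equivFin.symm t))
    (fun t => c (J.equivFin.symm t)) (fun t => e (J.equivFin.symm t)) hx' hy'
  calc ∑ i ∈ I, ∑ j ∈ J, d (c j ⊗ₜ[k] b i) ⊗ₜ[k] p (a i ⊗ₜ[k] e j)
      = ∑ t : Fin I.card, ∑ u : Fin J.card,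
          d (c (J.equivFin.symm u) ⊗ₜ[k] b (I.equivFin.symm t)) ⊗ₜ[k]
            p (a (I.equivFin.symm t) ⊗ₜ[k] e (J.equivFin.symm u)) := by
        rw [finset_to_fin I]
        exact Finset.sum_congr rfl fun t _ => by rw [finset_to_fin J]
    _ = ∑ t : Fin I.card, ∑ u : Fin J.card,
          d (e (J.equivFin.symm u) ⊗ₜ[k] a (I.equivFin.symm t)) ⊗ₜ[k]
            p (b (I.equivFin.symm t) ⊗ₜ[k] c (J.equivFin.symm u)) := H
    _ = ∑ i ∈ I, ∑ j ∈ J, d (e j ⊗ₜ[k] a i) ⊗ₜ[k] p (b i ⊗ₜ[k] c j) := by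
        rw [finset_to_fin I (fun i => ∑ j ∈ J, d (e j ⊗ₜ[k] a i) ⊗ₜ[k] p (b i ⊗ₜ[k] c j))]
        exact Finset.sum_congr rfl fun t _ => by
          rw [finset_to_fin J (fun j => d (e j ⊗ₜ[k] a _) ⊗ₜ[k] p (b _ ⊗ₜ[k] c j))]

end HelpersC
section HelpersD

open Coalgebra

variable {ι κ : Type*}

theorem sum_counit_counit {I : Finset ι} {a b : ι → X} {y : X}
    (h : ∑ i ∈ I, a i ⊗ₜ[k] b i = Coalgebra.comul (R := k) y) :
    ∑ i ∈ I, Coalgebra.counit (R := k) (a i) * Coalgebra.counit (R := k) (b i)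
      = Coalgebra.counit (R := k) y := by
  have H := congrArg (Coalgebra.counit (R := k)) (sum_counit_smul k X h)
  simpa [map_sum, map_smul, smul_eq_mul] using H

theorem Gmap_cE : Gmap k X (cE k X) = LinearMap.id := by
  apply TensorProduct.ext'
  intro x y
  rw [Gmap_tmul k X (cE k X) (ℛ k y).eq x]
  calc ∑ i ∈ (ℛ k y).index, cE k X (x ⊗ₜ[k] (ℛ k y).left i) ⊗ₜ[k] (ℛ k y).right i
      = x ⊗ₜ[k] ∑ i ∈ (ℛ k y).index,
          Coalgebra.counit (R := k) ((ℛ k y).left i) • (ℛ k y).right i := by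
        rw [tmul_sum]
        exact Finset.sum_congr rfl fun i _ => by rw [cE_tmul, smul_tmul]
    _ = LinearMap.id (x ⊗ₜ[k] y) := by rw [sum_counit_smul k X (ℛ k y).eq]; rfl

theorem Gmap_comp (f f' : X ⊗[k] X →ₗ[k] X) :
    Gmap k X f ∘ₗ Gmap k X f' = Gmap k X (f ∘ₗ Gmap k X f') := by
  apply TensorProduct.ext'
  intro x y
  set r := ℛ k y
  have C := coassoc3 k X
    (TensorProduct.map f LinearMap.id ∘ₗ (TensorProduct.assoc k X X X).symm.toLinearMap ∘ₗ
      LinearMap.rTensor (X ⊗[k] X) (f' ∘ₗ TensorProduct.mk k X X x))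
    r (fun i => ℛ k (r.left i)) (fun i => ℛ k (r.right i))
  simp only [LinearMap.comp_apply, LinearMap.rTensor_tmul, TensorProduct.mk_apply,
    TensorProduct.assoc_symm_tmul, TensorProduct.map_tmul,
    LinearMap.id_coe, id_eq] at C
  rw [LinearMap.comp_apply, Gmap_tmul k X f' r.eq x, map_sum]
  rw [Gmap_tmul k X (f ∘ₗ Gmap k X f') r.eq x]
  calc ∑ i ∈ r.index, Gmap k X f (f' (x ⊗ₜ[k] r.left i) ⊗ₜ[k] r.right i)
      = ∑ i ∈ r.index, ∑ j ∈ (ℛ k (r.right i)).index,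
          f (f' (x ⊗ₜ[k] r.left i) ⊗ₜ[k] (ℛ k (r.right i)).left j) ⊗ₜ[k]
            (ℛ k (r.right i)).right j := by
        exact Finset.sum_congr rfl fun i _ => by
          rw [Gmap_tmul k X f (ℛ k (r.right i)).eq]
    _ = ∑ i ∈ r.index, ∑ j ∈ (ℛ k (r.left i)).index,
          f (f' (x ⊗ₜ[k] (ℛ k (r.left i)).left j) ⊗ₜ[k] (ℛ k (r.left i)).right j) ⊗ₜ[k]
            r.right i := C.symm
    _ = ∑ i ∈ r.index, (f ∘ₗ Gmap k X f') (x ⊗ₜ[k] r.left i) ⊗ₜ[k] r.right i := by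
        refine Finset.sum_congr rfl fun i _ => ?_
        rw [LinearMap.comp_apply, Gmap_tmul k X f' (ℛ k (r.left i)).eq x, map_sum,
          TensorProduct.sum_tmul]

end HelpersD
section HelpersE

open Coalgebra

variable {ι κ : Type*}

theorem eps_g {p g : X ⊗[k] X →ₗ[k] X}
    (hp2 : Coalgebra.counit (R := k) ∘ₗ p = counitT k X)
    (hg1 : p ∘ₗ Gmap k X g = cE k X) :
    Coalgebra.counit (R := k) ∘ₗ g = counitT k X := by
  apply TensorProduct.ext'
  intro x y
  rw [LinearMap.comp_apply, counitT_tmul]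
  set r := ℛ k y
  have H := congrArg (Coalgebra.counit (R := k)) (hg2_sum k X hg1 r.eq x)
  rw [map_sum, map_smul] at H
  simp only [smul_eq_mul] at H
  have H2 : ∑ i ∈ r.index,
      Coalgebra.counit (R := k) (g (x ⊗ₜ[k] r.left i)) * Coalgebra.counit (R := k) (r.right i)
      = Coalgebra.counit (R := k) y * Coalgebra.counit (R := k) x := by
    rw [← H]
    exact Finset.sum_congr rfl fun i _ => (morCop_counit k X hp2 _ _).symm
  calc Coalgebra.counit (R := k) (g (x ⊗ₜ[k] y))
      = ∑ i ∈ r.index, Coalgebra.counit (R := k) (r.right i) •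
          Coalgebra.counit (R := k) (g (x ⊗ₜ[k] r.left i)) := by
        conv_lhs => rw [← sum_smul_counit k X r.eq]
        rw [tmul_sum, map_sum, map_sum]
        exact Finset.sum_congr rfl fun i _ => by rw [tmul_smul, map_smul, map_smul]
    _ = Coalgebra.counit (R := k) x * Coalgebra.counit (R := k) y := by
        simp only [smul_eq_mul]
        rw [show Coalgebra.counit (R := k) x * Coalgebra.counit (R := k) y =
          Coalgebra.counit (R := k) y * Coalgebra.counit (R := k) x from mul_comm _ _, ← H2]
        exact Finset.sum_congr rfl fun i _ => mul_comm _ _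

theorem eps_b {g d : X ⊗[k] X →ₗ[k] X}
    (hd2 : Coalgebra.counit (R := k) ∘ₗ d = counitT k X)
    (hg : Coalgebra.counit (R := k) ∘ₗ g = counitT k X) :
    Coalgebra.counit (R := k) ∘ₗ bOf k X g d = counitT k X := by
  apply TensorProduct.ext'
  intro x y
  rw [LinearMap.comp_apply, counitT_tmul]
  set r := ℛ k y
  rw [bOf_tmul k X g d r.eq, map_sum]
  calc ∑ i ∈ r.index, Coalgebra.counit (R := k) (d (r.right i ⊗ₜ[k] g (x ⊗ₜ[k] r.left i)))
      = ∑ i ∈ r.index, (Coalgebra.counit (R := k) x) *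
          (Coalgebra.counit (R := k) (r.left i) * Coalgebra.counit (R := k) (r.right i)) := by
        refine Finset.sum_congr rfl fun i _ => ?_
        rw [morCop_counit k X hd2, morCop_counit k X hg]
        ring
    _ = Coalgebra.counit (R := k) x * Coalgebra.counit (R := k) y := by
        rw [← Finset.mul_sum, sum_counit_counit k X r.eq]

theorem counitT_s {g d : X ⊗[k] X →ₗ[k] X}
    (hb : Coalgebra.counit (R := k) ∘ₗ bOf k X g d = counitT k X)
    (hg : Coalgebra.counit (R := k) ∘ₗ g = counitT k X) :
    counitT k X ∘ₗ (TensorProduct.map (bOf k X g d) g ∘ₗ comulTcc k X) = counitT k X := by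
  apply TensorProduct.ext'
  intro x y
  rw [LinearMap.comp_apply, smap_tmul k X _ g (ℛ k x).eq (ℛ k y).eq, map_sum, counitT_tmul]
  set rx := ℛ k x
  set ry := ℛ k y
  calc ∑ i ∈ rx.index, counitT k X (∑ j ∈ ry.index,
        bOf k X g d (rx.right i ⊗ₜ[k] ry.right j) ⊗ₜ[k] g (rx.left i ⊗ₜ[k] ry.left j))
      = ∑ i ∈ rx.index, ∑ j ∈ ry.index,
          (Coalgebra.counit (R := k) (rx.left i) * Coalgebra.counit (R := k) (rx.right i)) *
          (Coalgebra.counit (R := k) (ry.left j) * Coalgebra.counit (R := k) (ry.right j)) := by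
        refine Finset.sum_congr rfl fun i _ => ?_
        rw [map_sum]
        refine Finset.sum_congr rfl fun j _ => ?_
        rw [counitT_tmul, morCop_counit k X hb, morCop_counit k X hg]
        ring
    _ = Coalgebra.counit (R := k) x * Coalgebra.counit (R := k) y := by
        rw [← Finset.sum_mul_sum, sum_counit_counit k X rx.eq, sum_counit_counit k X ry.eq]

theorem comp2_s {g d : X ⊗[k] X →ₗ[k] X}
    (hb : Coalgebra.counit (R := k) ∘ₗ bOf k X g d = counitT k X) :
    comp2 k X (TensorProduct.map (bOf k X g d) g ∘ₗ comulTcc k X) = g := by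
  apply TensorProduct.ext'
  intro x y
  rw [comp2, LinearMap.comp_apply, smap_tmul k X _ g (ℛ k x).eq (ℛ k y).eq, map_sum]
  set rx := ℛ k x with hrx
  set ry := ℛ k y with hry
  calc ∑ i ∈ rx.index, cE' k X (∑ j ∈ ry.index,
        bOf k X g d (rx.right i ⊗ₜ[k] ry.right j) ⊗ₜ[k] g (rx.left i ⊗ₜ[k] ry.left j))
      = ∑ i ∈ rx.index, ∑ j ∈ ry.index,
          g ((Coalgebra.counit (R := k) (rx.right i) • rx.left i) ⊗ₜ[k]
             (Coalgebra.counit (R := k) (ry.right j) • ry.left j)) := by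
        refine Finset.sum_congr rfl fun i _ => ?_
        rw [map_sum]
        refine Finset.sum_congr rfl fun j _ => ?_
        rw [cE'_tmul, morCop_counit k X hb]
        have : g ((Coalgebra.counit (R := k) (rx.right i) • rx.left i) ⊗ₜ[k]
            (Coalgebra.counit (R := k) (ry.right j) • ry.left j)) =
            (Coalgebra.counit (R := k) (rx.right i) * Coalgebra.counit (R := k) (ry.right j)) •
              g (rx.left i ⊗ₜ[k] ry.left j) := by
          simp [TensorProduct.smul_tmul', TensorProduct.tmul_smul, smul_smul, map_smul, mul_comm]
          rw [← TensorProduct.smul_tmul', map_smul]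
        rw [this]
    _ = g ((∑ i ∈ rx.index, Coalgebra.counit (R := k) (rx.right i) • rx.left i) ⊗ₜ[k]
           (∑ j ∈ ry.index, Coalgebra.counit (R := k) (ry.right j) • ry.left j)) := by
        rw [TensorProduct.sum_tmul, map_sum]
        refine Finset.sum_congr rfl fun i _ => ?_
        rw [TensorProduct.tmul_sum, map_sum]
    _ = g (x ⊗ₜ[k] y) := by
        rw [sum_smul_counit k X rx.eq, sum_smul_counit k X ry.eq]

end HelpersE
section HelpersF

open Coalgebra

/-- the map `x ⊗ y ↦ d (y ⊗ x₍₂₎) ⊗ x₍₁₎` -/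
def Kmap (dm : X ⊗[k] X →ₗ[k] X) : X ⊗[k] X →ₗ[k] X ⊗[k] X :=
  TensorProduct.map dm LinearMap.id ∘ₗ (TensorProduct.assoc k X X X).symm.toLinearMap ∘ₗ
    LinearMap.lTensor X (TensorProduct.comm k X X).toLinearMap ∘ₗ
    (TensorProduct.comm k (X ⊗[k] X) X).toLinearMap ∘ₗ
    LinearMap.rTensor X (Coalgebra.comul (R := k))

theorem Kmap_tmul (dm : X ⊗[k] X →ₗ[k] X) {ι : Type*} {I : Finset ι} {a b : ι → X} {x : X}
    (hx : ∑ i ∈ I, a i ⊗ₜ[k] b i = Coalgebra.comul (R := k) x) (y : X) :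
    Kmap k X dm (x ⊗ₜ[k] y) = ∑ i ∈ I, dm (y ⊗ₜ[k] b i) ⊗ₜ[k] a i := by
  simp [Kmap, ← hx, sum_tmul, map_sum]

theorem claim1 {p g d : X ⊗[k] X →ₗ[k] X}
    (hp1 : Coalgebra.comul (R := k) ∘ₗ p = TensorProduct.map p p ∘ₗ comulTCop k X)
    (hg2 : g ∘ₗ Gmap k X p = cE k X) :
    (TensorProduct.map (bOf k X g d) g ∘ₗ comulTcc k X) ∘ₗ Gmap k X p = Kmap k X d := by
  apply TensorProduct.ext'
  intro x y
  set rx := ℛ k x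
  set ry := ℛ k y
  set r1 : (j : ry.ι) → Coalgebra.Repr k (ry.left j) (X × X) := fun j => ℛ k (ry.left j) with hr1
  set r2 : (j : ry.ι) → Coalgebra.Repr k (ry.right j) (X × X) := fun j => ℛ k (ry.right j) with hr2
  set r3 : (j : ry.ι) → (l : (r2 j).ι) → Coalgebra.Repr k ((r2 j).left l) (X × X) :=
    fun j l => ℛ k ((r2 j).left l) with hr3
  rw [LinearMap.comp_apply, Gmap_tmul k X p ry.eq x, map_sum,
    Kmap_tmul k X d rx.eq y]
  -- expand s on each term
  have expand : ∀ j ∈ ry.index,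
      (TensorProduct.map (bOf k X g d) g ∘ₗ comulTcc k X) (p (x ⊗ₜ[k] ry.left j) ⊗ₜ[k] ry.right j)
      = ∑ i ∈ rx.index, ∑ kk ∈ (r1 j).index, ∑ l ∈ (r2 j).index,
          bOf k X g d (p (rx.right i ⊗ₜ[k] (r1 j).left kk) ⊗ₜ[k] (r2 j).right l) ⊗ₜ[k]
            g (p (rx.left i ⊗ₜ[k] (r1 j).right kk) ⊗ₜ[k] (r2 j).left l) := by
    intro j _
    have hP : ∑ z ∈ rx.index ×ˢ (r1 j).index,
        p (rx.left z.1 ⊗ₜ[k] (r1 j).right z.2) ⊗ₜ[k] p (rx.right z.1 ⊗ₜ[k] (r1 j).left z.2)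
        = Coalgebra.comul (R := k) (p (x ⊗ₜ[k] ry.left j)) := by
      rw [Finset.sum_product]
      exact (morCop_comul_sum k X hp1 rx.eq (r1 j).eq).symm
    rw [smap_tmul k X (bOf k X g d) g hP (r2 j).eq, Finset.sum_product]
  rw [Finset.sum_congr rfl expand, Finset.sum_comm]
  -- coassoc4 on the y-side, for each i
  have step2 : ∀ i ∈ rx.index,
      ∑ j ∈ ry.index, ∑ kk ∈ (r1 j).index, ∑ l ∈ (r2 j).index,
        bOf k X g d (p (rx.right i ⊗ₜ[k] (r1 j).left kk) ⊗ₜ[k] (r2 j).right l) ⊗ₜ[k]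
          g (p (rx.left i ⊗ₜ[k] (r1 j).right kk) ⊗ₜ[k] (r2 j).left l)
      = ∑ j ∈ ry.index, ∑ l ∈ (r2 j).index, ∑ m ∈ (r3 j l).index,
        bOf k X g d (p (rx.right i ⊗ₜ[k] ry.left j) ⊗ₜ[k] (r2 j).right l) ⊗ₜ[k]
          g (p (rx.left i ⊗ₜ[k] (r3 j l).left m) ⊗ₜ[k] (r3 j l).right m) := by
    intro i _
    have C := coassoc4 k X
      (TensorProduct.map (bOf k X g d) g ∘ₗ
        ((TensorProduct.assoc k X X (X ⊗[k] X)).symm.toLinearMap ∘ₗ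
          LinearMap.lTensor X ((TensorProduct.comm k (X ⊗[k] X) X).toLinearMap ∘ₗ
            (TensorProduct.assoc k X X X).symm.toLinearMap)) ∘ₗ
        LinearMap.lTensor X (LinearMap.rTensor (X ⊗[k] X)
          (p ∘ₗ TensorProduct.mk k X X (rx.left i))) ∘ₗ
        LinearMap.rTensor (X ⊗[k] (X ⊗[k] X)) (p ∘ₗ TensorProduct.mk k X X (rx.right i)))
      ry r1 r2 r3
    simpa [LinearMap.comp_apply] using C
  rw [Finset.sum_congr rfl step2]
  -- collapse the inner g∘p sums (over m), then the counit sums (over l)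
  have step3 : ∀ i ∈ rx.index,
      ∑ j ∈ ry.index, ∑ l ∈ (r2 j).index, ∑ m ∈ (r3 j l).index,
        bOf k X g d (p (rx.right i ⊗ₜ[k] ry.left j) ⊗ₜ[k] (r2 j).right l) ⊗ₜ[k]
          g (p (rx.left i ⊗ₜ[k] (r3 j l).left m) ⊗ₜ[k] (r3 j l).right m)
      = ∑ j ∈ ry.index,
          bOf k X g d (p (rx.right i ⊗ₜ[k] ry.left j) ⊗ₜ[k] ry.right j) ⊗ₜ[k] rx.left i := by
    intro i _
    refine Finset.sum_congr rfl fun j _ => ?_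
    calc ∑ l ∈ (r2 j).index, ∑ m ∈ (r3 j l).index,
          bOf k X g d (p (rx.right i ⊗ₜ[k] ry.left j) ⊗ₜ[k] (r2 j).right l) ⊗ₜ[k]
            g (p (rx.left i ⊗ₜ[k] (r3 j l).left m) ⊗ₜ[k] (r3 j l).right m)
        = ∑ l ∈ (r2 j).index,
            bOf k X g d (p (rx.right i ⊗ₜ[k] ry.left j) ⊗ₜ[k]
              (Coalgebra.counit (R := k) ((r2 j).left l) • (r2 j).right l)) ⊗ₜ[k] rx.left i := by
          refine Finset.sum_congr rfl fun l _ => ?_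
          rw [← TensorProduct.tmul_sum, hg2_sum k X hg2 (r3 j l).eq,
            TensorProduct.tmul_smul, TensorProduct.smul_tmul',
            ← dsmul₁ k X (bOf k X g d), ← TensorProduct.smul_tmul', ← TensorProduct.tmul_smul]
      _ = bOf k X g d (p (rx.right i ⊗ₜ[k] ry.left j) ⊗ₜ[k] ry.right j) ⊗ₜ[k] rx.left i := by
          rw [← TensorProduct.sum_tmul, ← map_sum, ← TensorProduct.tmul_sum,
            sum_counit_smul k X (r2 j).eq]
  rw [Finset.sum_congr rfl step3]
  -- expand bOf, coassoc3 back, collapse again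
  refine Finset.sum_congr rfl fun i _ => ?_
  have step4 : ∑ j ∈ ry.index,
      bOf k X g d (p (rx.right i ⊗ₜ[k] ry.left j) ⊗ₜ[k] ry.right j) ⊗ₜ[k] rx.left i
      = ∑ j ∈ ry.index, ∑ l ∈ (r2 j).index,
        d ((r2 j).right l ⊗ₜ[k] g (p (rx.right i ⊗ₜ[k] ry.left j) ⊗ₜ[k] (r2 j).left l)) ⊗ₜ[k]
          rx.left i := by
    refine Finset.sum_congr rfl fun j _ => ?_
    rw [bOf_tmul k X g d (r2 j).eq, TensorProduct.sum_tmul]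
  rw [step4]
  have C3 := coassoc3 k X
    (((TensorProduct.mk k X X).flip (rx.left i)) ∘ₗ d ∘ₗ (TensorProduct.comm k X X).toLinearMap ∘ₗ
      LinearMap.rTensor X (g ∘ₗ LinearMap.rTensor X (p ∘ₗ TensorProduct.mk k X X (rx.right i))) ∘ₗ
      (TensorProduct.assoc k X X X).symm.toLinearMap)
    ry r1 r2
  simp only [LinearMap.comp_apply, LinearEquiv.coe_coe, TensorProduct.assoc_symm_tmul,
    LinearMap.rTensor_tmul, TensorProduct.mk_apply, TensorProduct.comm_tmul,
    LinearMap.flip_apply] at C3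
  rw [← C3]
  calc ∑ j ∈ ry.index, ∑ kk ∈ (r1 j).index,
        d (ry.right j ⊗ₜ[k] g (p (rx.right i ⊗ₜ[k] (r1 j).left kk) ⊗ₜ[k] (r1 j).right kk)) ⊗ₜ[k]
          rx.left i
      = ∑ j ∈ ry.index,
          d ((Coalgebra.counit (R := k) (ry.left j) • ry.right j) ⊗ₜ[k] rx.right i) ⊗ₜ[k]
            rx.left i := by
        refine Finset.sum_congr rfl fun j _ => ?_
        rw [← TensorProduct.sum_tmul, ← map_sum, ← TensorProduct.tmul_sum,
          hg2_sum k X hg2 (r1 j).eq, dsmul₂ k X d, ← dsmul₁ k X d]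
    _ = d (y ⊗ₜ[k] rx.right i) ⊗ₜ[k] rx.left i := by
        rw [← TensorProduct.sum_tmul, ← map_sum, ← TensorProduct.sum_tmul,
          sum_counit_smul k X ry.eq]

end HelpersF
section HelpersG

open Coalgebra

theorem claim1_sum {p g d : X ⊗[k] X →ₗ[k] X}
    (hp1 : Coalgebra.comul (R := k) ∘ₗ p = TensorProduct.map p p ∘ₗ comulTCop k X)
    (hg2 : g ∘ₗ Gmap k X p = cE k X)
    {ι : Type*} {I : Finset ι} {a b : ι → X} {w : X}
    (hw : ∑ i ∈ I, a i ⊗ₜ[k] b i = Coalgebra.comul (R := k) w) (z : X) :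
    ∑ i ∈ I, (TensorProduct.map (bOf k X g d) g ∘ₗ comulTcc k X) (p (z ⊗ₜ[k] a i) ⊗ₜ[k] b i)
      = ∑ n ∈ (ℛ k z).index, d (w ⊗ₜ[k] (ℛ k z).right n) ⊗ₜ[k] (ℛ k z).left n := by
  have H := LinearMap.congr_fun (claim1 k X (p := p) (g := g) (d := d) hp1 hg2) (z ⊗ₜ[k] w)
  rw [LinearMap.comp_apply, Gmap_tmul k X p hw z, map_sum, Kmap_tmul k X d (ℛ k z).eq w] at H
  exact H

theorem key_comul {p g d : X ⊗[k] X →ₗ[k] X}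
    (hp1 : Coalgebra.comul (R := k) ∘ₗ p = TensorProduct.map p p ∘ₗ comulTCop k X)
    (hd1 : Coalgebra.comul (R := k) ∘ₗ d = TensorProduct.map d d ∘ₗ comulTCop k X)
    (hex : ExchangeId k X p d)
    (hg2 : g ∘ₗ Gmap k X p = cE k X) (x y : X) :
    comulT k X (Kmap k X d (x ⊗ₜ[k] y)) =
      TensorProduct.map (TensorProduct.map (bOf k X g d) g ∘ₗ comulTcc k X)
        (TensorProduct.map (bOf k X g d) g ∘ₗ comulTcc k X)
        (comulT k X (Gmap k X p (x ⊗ₜ[k] y))) := by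
  set s := TensorProduct.map (bOf k X g d) g ∘ₗ comulTcc k X with hs
  set rx := ℛ k x
  set ry := ℛ k y
  set rxl : (i : rx.ι) → Coalgebra.Repr k (rx.left i) (X × X) := fun i => ℛ k (rx.left i) with hrxl
  set rxr : (i : rx.ι) → Coalgebra.Repr k (rx.right i) (X × X) := fun i => ℛ k (rx.right i) with hrxr
  set r1 : (j : ry.ι) → Coalgebra.Repr k (ry.left j) (X × X) := fun j => ℛ k (ry.left j) with hr1
  set r2 : (j : ry.ι) → Coalgebra.Repr k (ry.right j) (X × X) := fun j => ℛ k (ry.right j) with hr2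
  set r3 : (j : ry.ι) → (l : (r2 j).ι) → Coalgebra.Repr k ((r2 j).left l) (X × X) :=
    fun j l => ℛ k ((r2 j).left l) with hr3
  set r4 : (i : rx.ι) → (n : (rxr i).ι) → Coalgebra.Repr k ((rxr i).left n) (X × X) :=
    fun i n => ℛ k ((rxr i).left n) with hr4
  -- LHS expansion
  have hL : comulT k X (Kmap k X d (x ⊗ₜ[k] y)) =
      ∑ i ∈ rx.index, ∑ j ∈ ry.index, ∑ kk ∈ (rxr i).index, ∑ l ∈ (rxl i).index,
        (d (ry.left j ⊗ₜ[k] (rxr i).right kk) ⊗ₜ[k] (rxl i).left l) ⊗ₜ[k]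
          (d (ry.right j ⊗ₜ[k] (rxr i).left kk) ⊗ₜ[k] (rxl i).right l) := by
    rw [Kmap_tmul k X d rx.eq y, map_sum]
    refine Finset.sum_congr rfl fun i _ => ?_
    have hD : ∑ z ∈ ry.index ×ˢ (rxr i).index,
        d (ry.left z.1 ⊗ₜ[k] (rxr i).right z.2) ⊗ₜ[k] d (ry.right z.1 ⊗ₜ[k] (rxr i).left z.2)
        = Coalgebra.comul (R := k) (d (y ⊗ₜ[k] rx.right i)) := by
      rw [Finset.sum_product]
      exact (morCop_comul_sum k X hd1 ry.eq (rxr i).eq).symm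
    rw [comulT_tmul k X hD (rxl i).eq, Finset.sum_product]
  rw [hL]
  -- RHS expansion to †R
  have hR : TensorProduct.map s s (comulT k X (Gmap k X p (x ⊗ₜ[k] y))) =
      ∑ j ∈ ry.index, ∑ i ∈ rx.index, ∑ kk ∈ (r1 j).index, ∑ l ∈ (r2 j).index,
        s (p (rx.left i ⊗ₜ[k] (r1 j).right kk) ⊗ₜ[k] (r2 j).left l) ⊗ₜ[k]
          s (p (rx.right i ⊗ₜ[k] (r1 j).left kk) ⊗ₜ[k] (r2 j).right l) := by
    rw [Gmap_tmul k X p ry.eq x, map_sum, map_sum]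
    refine Finset.sum_congr rfl fun j _ => ?_
    have hP : ∑ z ∈ rx.index ×ˢ (r1 j).index,
        p (rx.left z.1 ⊗ₜ[k] (r1 j).right z.2) ⊗ₜ[k] p (rx.right z.1 ⊗ₜ[k] (r1 j).left z.2)
        = Coalgebra.comul (R := k) (p (x ⊗ₜ[k] ry.left j)) := by
      rw [Finset.sum_product]
      exact (morCop_comul_sum k X hp1 rx.eq (r1 j).eq).symm
    rw [comulT_tmul k X hP (r2 j).eq, Finset.sum_product, map_sum]
    refine Finset.sum_congr rfl fun i _ => ?_
    rw [map_sum]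
    refine Finset.sum_congr rfl fun kk _ => ?_
    rw [map_sum]
    exact Finset.sum_congr rfl fun l _ => rfl
  rw [hR]
  -- reorder to Σ i outer
  conv_rhs => rw [Finset.sum_comm]
  -- Step R1: coassoc4 on the y-side, per i
  have stepR1 : ∀ i ∈ rx.index,
      ∑ j ∈ ry.index, ∑ kk ∈ (r1 j).index, ∑ l ∈ (r2 j).index,
        s (p (rx.left i ⊗ₜ[k] (r1 j).right kk) ⊗ₜ[k] (r2 j).left l) ⊗ₜ[k]
          s (p (rx.right i ⊗ₜ[k] (r1 j).left kk) ⊗ₜ[k] (r2 j).right l)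
      = ∑ j ∈ ry.index, ∑ l ∈ (r2 j).index, ∑ m ∈ (r3 j l).index,
        s (p (rx.left i ⊗ₜ[k] (r3 j l).left m) ⊗ₜ[k] (r3 j l).right m) ⊗ₜ[k]
          s (p (rx.right i ⊗ₜ[k] ry.left j) ⊗ₜ[k] (r2 j).right l) := by
    intro i _
    have C := coassoc4 k X
      (TensorProduct.map s s ∘ₗ (TensorProduct.assoc k (X ⊗[k] X) X X).toLinearMap ∘ₗ
        LinearMap.rTensor X (TensorProduct.comm k X (X ⊗[k] X)).toLinearMap ∘ₗ
        (TensorProduct.assoc k X (X ⊗[k] X) X).symm.toLinearMap ∘ₗ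
        LinearMap.lTensor X (TensorProduct.assoc k X X X).symm.toLinearMap ∘ₗ
        LinearMap.lTensor X (LinearMap.rTensor (X ⊗[k] X)
          (p ∘ₗ TensorProduct.mk k X X (rx.left i))) ∘ₗ
        LinearMap.rTensor (X ⊗[k] (X ⊗[k] X)) (p ∘ₗ TensorProduct.mk k X X (rx.right i)))
      ry r1 r2 r3
    simpa [LinearMap.comp_apply] using C
  rw [Finset.sum_congr rfl stepR1]
  -- Step R2: collapse the inner m-sums via claim1
  have stepR2 : ∀ i ∈ rx.index,
      ∑ j ∈ ry.index, ∑ l ∈ (r2 j).index, ∑ m ∈ (r3 j l).index,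
        s (p (rx.left i ⊗ₜ[k] (r3 j l).left m) ⊗ₜ[k] (r3 j l).right m) ⊗ₜ[k]
          s (p (rx.right i ⊗ₜ[k] ry.left j) ⊗ₜ[k] (r2 j).right l)
      = ∑ j ∈ ry.index, ∑ l ∈ (r2 j).index, ∑ n ∈ (rxl i).index,
        (d ((r2 j).left l ⊗ₜ[k] (rxl i).right n) ⊗ₜ[k] (rxl i).left n) ⊗ₜ[k]
          s (p (rx.right i ⊗ₜ[k] ry.left j) ⊗ₜ[k] (r2 j).right l) := by
    intro i _
    refine Finset.sum_congr rfl fun j _ => Finset.sum_congr rfl fun l _ => ?_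
    rw [← TensorProduct.sum_tmul, ← TensorProduct.sum_tmul, hs]
    rw [claim1_sum k X hp1 hg2 (r3 j l).eq (rx.left i)]
  rw [Finset.sum_congr rfl stepR2]
  -- reorder: per i, bring the n-sum out
  have reorder1 : ∀ i ∈ rx.index,
      ∑ j ∈ ry.index, ∑ l ∈ (r2 j).index, ∑ n ∈ (rxl i).index,
        (d ((r2 j).left l ⊗ₜ[k] (rxl i).right n) ⊗ₜ[k] (rxl i).left n) ⊗ₜ[k]
          s (p (rx.right i ⊗ₜ[k] ry.left j) ⊗ₜ[k] (r2 j).right l)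
      = ∑ n ∈ (rxl i).index, ∑ j ∈ ry.index, ∑ l ∈ (r2 j).index,
        (d ((r2 j).left l ⊗ₜ[k] (rxl i).right n) ⊗ₜ[k] (rxl i).left n) ⊗ₜ[k]
          s (p (rx.right i ⊗ₜ[k] ry.left j) ⊗ₜ[k] (r2 j).right l) := by
    intro i _
    rw [show (∑ j ∈ ry.index, ∑ l ∈ (r2 j).index, ∑ n ∈ (rxl i).index,
        (d ((r2 j).left l ⊗ₜ[k] (rxl i).right n) ⊗ₜ[k] (rxl i).left n) ⊗ₜ[k]
          s (p (rx.right i ⊗ₜ[k] ry.left j) ⊗ₜ[k] (r2 j).right l))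
      = ∑ j ∈ ry.index, ∑ n ∈ (rxl i).index, ∑ l ∈ (r2 j).index,
        (d ((r2 j).left l ⊗ₜ[k] (rxl i).right n) ⊗ₜ[k] (rxl i).left n) ⊗ₜ[k]
          s (p (rx.right i ⊗ₜ[k] ry.left j) ⊗ₜ[k] (r2 j).right l)
      from Finset.sum_congr rfl fun j _ => Finset.sum_comm]
    exact Finset.sum_comm
  rw [Finset.sum_congr rfl reorder1]
  -- Step R3 : coassoc3 on the x-side
  have stepR3 :
      ∑ i ∈ rx.index, ∑ n ∈ (rxl i).index, ∑ j ∈ ry.index, ∑ l ∈ (r2 j).index,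
        (d ((r2 j).left l ⊗ₜ[k] (rxl i).right n) ⊗ₜ[k] (rxl i).left n) ⊗ₜ[k]
          s (p (rx.right i ⊗ₜ[k] ry.left j) ⊗ₜ[k] (r2 j).right l)
      = ∑ i ∈ rx.index, ∑ n ∈ (rxr i).index, ∑ j ∈ ry.index, ∑ l ∈ (r2 j).index,
        (d ((r2 j).left l ⊗ₜ[k] (rxr i).left n) ⊗ₜ[k] rx.left i) ⊗ₜ[k]
          s (p ((rxr i).right n ⊗ₜ[k] ry.left j) ⊗ₜ[k] (r2 j).right l) := by
    have C := coassoc3 k X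
      (∑ j ∈ ry.index, ∑ l ∈ (r2 j).index,
        (TensorProduct.map
          (TensorProduct.map (d ∘ₗ TensorProduct.mk k X X ((r2 j).left l)) LinearMap.id)
          (s ∘ₗ (TensorProduct.mk k X X).flip ((r2 j).right l) ∘ₗ p ∘ₗ
            (TensorProduct.mk k X X).flip (ry.left j)) ∘ₗ
          LinearMap.rTensor X (TensorProduct.comm k X X).toLinearMap ∘ₗ
          (TensorProduct.assoc k X X X).symm.toLinearMap))
      rx rxl rxr
    simp only [LinearMap.sum_apply, LinearMap.comp_apply, LinearEquiv.coe_coe,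
      TensorProduct.assoc_symm_tmul, LinearMap.rTensor_tmul, TensorProduct.comm_tmul,
      TensorProduct.map_tmul, TensorProduct.mk_apply, LinearMap.flip_apply,
      LinearMap.id_coe, id_eq] at C
    exact C
  rw [stepR3]
  -- Step R4 : per (i,n), coassoc3 on the y-side, backwards
  have stepR4 : ∀ i ∈ rx.index,
      ∑ n ∈ (rxr i).index, ∑ j ∈ ry.index, ∑ l ∈ (r2 j).index,
        (d ((r2 j).left l ⊗ₜ[k] (rxr i).left n) ⊗ₜ[k] rx.left i) ⊗ₜ[k]
          s (p ((rxr i).right n ⊗ₜ[k] ry.left j) ⊗ₜ[k] (r2 j).right l)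
      = ∑ n ∈ (rxr i).index, ∑ j ∈ ry.index, ∑ kk ∈ (r1 j).index,
        (d ((r1 j).right kk ⊗ₜ[k] (rxr i).left n) ⊗ₜ[k] rx.left i) ⊗ₜ[k]
          s (p ((rxr i).right n ⊗ₜ[k] (r1 j).left kk) ⊗ₜ[k] ry.right j) := by
    intro i _
    refine Finset.sum_congr rfl fun n _ => ?_
    have C := coassoc3 k X
      (TensorProduct.map
        ((TensorProduct.mk k X X).flip (rx.left i) ∘ₗ d ∘ₗ
          (TensorProduct.mk k X X).flip ((rxr i).left n))
        (s ∘ₗ LinearMap.rTensor X (p ∘ₗ TensorProduct.mk k X X ((rxr i).right n))) ∘ₗ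
        (TensorProduct.leftComm k X X X).toLinearMap)
      ry r1 r2
    simp only [LinearMap.comp_apply, LinearEquiv.coe_coe, TensorProduct.leftComm_tmul,
      TensorProduct.map_tmul, TensorProduct.mk_apply, LinearMap.flip_apply,
      LinearMap.rTensor_tmul] at C
    exact C.symm
  rw [Finset.sum_congr rfl stepR4]
  -- Step R5 : exchange identity
  have stepR5 : ∀ i ∈ rx.index,
      ∑ n ∈ (rxr i).index, ∑ j ∈ ry.index, ∑ kk ∈ (r1 j).index,
        (d ((r1 j).right kk ⊗ₜ[k] (rxr i).left n) ⊗ₜ[k] rx.left i) ⊗ₜ[k]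
          s (p ((rxr i).right n ⊗ₜ[k] (r1 j).left kk) ⊗ₜ[k] ry.right j)
      = ∑ n ∈ (rxr i).index, ∑ j ∈ ry.index, ∑ kk ∈ (r1 j).index,
        (d ((r1 j).left kk ⊗ₜ[k] (rxr i).right n) ⊗ₜ[k] rx.left i) ⊗ₜ[k]
          s (p ((rxr i).left n ⊗ₜ[k] (r1 j).right kk) ⊗ₜ[k] ry.right j) := by
    intro i _
    rw [Finset.sum_comm]
    rw [show (∑ n ∈ (rxr i).index, ∑ j ∈ ry.index, ∑ kk ∈ (r1 j).index,
        (d ((r1 j).left kk ⊗ₜ[k] (rxr i).right n) ⊗ₜ[k] rx.left i) ⊗ₜ[k]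
          s (p ((rxr i).left n ⊗ₜ[k] (r1 j).right kk) ⊗ₜ[k] ry.right j))
      = ∑ j ∈ ry.index, ∑ n ∈ (rxr i).index, ∑ kk ∈ (r1 j).index,
        (d ((r1 j).left kk ⊗ₜ[k] (rxr i).right n) ⊗ₜ[k] rx.left i) ⊗ₜ[k]
          s (p ((rxr i).left n ⊗ₜ[k] (r1 j).right kk) ⊗ₜ[k] ry.right j)
      from Finset.sum_comm]
    refine Finset.sum_congr rfl fun j _ => ?_
    have H := (hex_sum k X hex (rxr i).eq (r1 j).eq).symm
    have H2 := congrArg (TensorProduct.map ((TensorProduct.mk k X X).flip (rx.left i))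
      (s ∘ₗ (TensorProduct.mk k X X).flip (ry.right j))) H
    simpa [map_sum] using H2
  rw [Finset.sum_congr rfl stepR5]
  -- Step R6 : coassoc3 on the y-side, forwards
  have stepR6 : ∀ i ∈ rx.index,
      ∑ n ∈ (rxr i).index, ∑ j ∈ ry.index, ∑ kk ∈ (r1 j).index,
        (d ((r1 j).left kk ⊗ₜ[k] (rxr i).right n) ⊗ₜ[k] rx.left i) ⊗ₜ[k]
          s (p ((rxr i).left n ⊗ₜ[k] (r1 j).right kk) ⊗ₜ[k] ry.right j)
      = ∑ n ∈ (rxr i).index, ∑ j ∈ ry.index, ∑ l ∈ (r2 j).index,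
        (d (ry.left j ⊗ₜ[k] (rxr i).right n) ⊗ₜ[k] rx.left i) ⊗ₜ[k]
          s (p ((rxr i).left n ⊗ₜ[k] (r2 j).left l) ⊗ₜ[k] (r2 j).right l) := by
    intro i _
    refine Finset.sum_congr rfl fun n _ => ?_
    have C := coassoc3 k X
      (TensorProduct.map
        ((TensorProduct.mk k X X).flip (rx.left i) ∘ₗ d ∘ₗ
          (TensorProduct.mk k X X).flip ((rxr i).right n))
        (s ∘ₗ LinearMap.rTensor X (p ∘ₗ TensorProduct.mk k X X ((rxr i).left n))))
      ry r1 r2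
    simp only [LinearMap.comp_apply, TensorProduct.map_tmul, TensorProduct.mk_apply,
      LinearMap.flip_apply, LinearMap.rTensor_tmul] at C
    exact C
  rw [Finset.sum_congr rfl stepR6]
  -- Step R7 : collapse the l-sums via claim1
  have stepR7 : ∀ i ∈ rx.index,
      ∑ n ∈ (rxr i).index, ∑ j ∈ ry.index, ∑ l ∈ (r2 j).index,
        (d (ry.left j ⊗ₜ[k] (rxr i).right n) ⊗ₜ[k] rx.left i) ⊗ₜ[k]
          s (p ((rxr i).left n ⊗ₜ[k] (r2 j).left l) ⊗ₜ[k] (r2 j).right l)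
      = ∑ n ∈ (rxr i).index, ∑ j ∈ ry.index, ∑ m ∈ (r4 i n).index,
        (d (ry.left j ⊗ₜ[k] (rxr i).right n) ⊗ₜ[k] rx.left i) ⊗ₜ[k]
          (d (ry.right j ⊗ₜ[k] (r4 i n).right m) ⊗ₜ[k] (r4 i n).left m) := by
    intro i _
    refine Finset.sum_congr rfl fun n _ => Finset.sum_congr rfl fun j _ => ?_
    rw [← TensorProduct.tmul_sum, hs, claim1_sum k X hp1 hg2 (r2 j).eq ((rxr i).left n),
      TensorProduct.tmul_sum]
  rw [Finset.sum_congr rfl stepR7]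
  -- Step R8 : coassoc4 on the x-side
  have C4 := coassoc4 k X
    (∑ j ∈ ry.index,
      (TensorProduct.map
        (TensorProduct.map (d ∘ₗ TensorProduct.mk k X X (ry.left j)) LinearMap.id)
        (TensorProduct.map (d ∘ₗ TensorProduct.mk k X X (ry.right j)) LinearMap.id) ∘ₗ
      TensorProduct.map (TensorProduct.comm k X X).toLinearMap
        (TensorProduct.comm k X X).toLinearMap ∘ₗ
      (TensorProduct.assoc k X X (X ⊗[k] X)).symm.toLinearMap ∘ₗ
      LinearMap.lTensor X (TensorProduct.leftComm k X X X).toLinearMap ∘ₗ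
      LinearMap.lTensor X (LinearMap.lTensor X (TensorProduct.comm k X X).toLinearMap)))
    rx rxl rxr r4
  simp only [LinearMap.sum_apply, LinearMap.comp_apply, LinearEquiv.coe_coe,
    LinearMap.lTensor_tmul, TensorProduct.comm_tmul, TensorProduct.leftComm_tmul,
    TensorProduct.assoc_symm_tmul, TensorProduct.map_tmul, TensorProduct.mk_apply,
    LinearMap.id_coe, id_eq] at C4
  -- reorder LHS (†L) to match C4's left side
  have reorderL : ∀ i ∈ rx.index,
      ∑ j ∈ ry.index, ∑ kk ∈ (rxr i).index, ∑ l ∈ (rxl i).index,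
        (d (ry.left j ⊗ₜ[k] (rxr i).right kk) ⊗ₜ[k] (rxl i).left l) ⊗ₜ[k]
          (d (ry.right j ⊗ₜ[k] (rxr i).left kk) ⊗ₜ[k] (rxl i).right l)
      = ∑ l ∈ (rxl i).index, ∑ kk ∈ (rxr i).index, ∑ j ∈ ry.index,
        (d (ry.left j ⊗ₜ[k] (rxr i).right kk) ⊗ₜ[k] (rxl i).left l) ⊗ₜ[k]
          (d (ry.right j ⊗ₜ[k] (rxr i).left kk) ⊗ₜ[k] (rxl i).right l) := by
    intro i _
    rw [show (∑ j ∈ ry.index, ∑ kk ∈ (rxr i).index, ∑ l ∈ (rxl i).index,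
        (d (ry.left j ⊗ₜ[k] (rxr i).right kk) ⊗ₜ[k] (rxl i).left l) ⊗ₜ[k]
          (d (ry.right j ⊗ₜ[k] (rxr i).left kk) ⊗ₜ[k] (rxl i).right l))
      = ∑ j ∈ ry.index, ∑ l ∈ (rxl i).index, ∑ kk ∈ (rxr i).index,
        (d (ry.left j ⊗ₜ[k] (rxr i).right kk) ⊗ₜ[k] (rxl i).left l) ⊗ₜ[k]
          (d (ry.right j ⊗ₜ[k] (rxr i).left kk) ⊗ₜ[k] (rxl i).right l)
      from Finset.sum_congr rfl fun j _ => Finset.sum_comm]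
    rw [show (∑ j ∈ ry.index, ∑ l ∈ (rxl i).index, ∑ kk ∈ (rxr i).index,
        (d (ry.left j ⊗ₜ[k] (rxr i).right kk) ⊗ₜ[k] (rxl i).left l) ⊗ₜ[k]
          (d (ry.right j ⊗ₜ[k] (rxr i).left kk) ⊗ₜ[k] (rxl i).right l))
      = ∑ l ∈ (rxl i).index, ∑ j ∈ ry.index, ∑ kk ∈ (rxr i).index,
        (d (ry.left j ⊗ₜ[k] (rxr i).right kk) ⊗ₜ[k] (rxl i).left l) ⊗ₜ[k]
          (d (ry.right j ⊗ₜ[k] (rxr i).left kk) ⊗ₜ[k] (rxl i).right l)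
      from Finset.sum_comm]
    exact Finset.sum_congr rfl fun l _ => Finset.sum_comm
  rw [Finset.sum_congr rfl reorderL]
  -- reorder RHS to match C4's right side
  have reorderR : ∀ i ∈ rx.index,
      ∑ n ∈ (rxr i).index, ∑ j ∈ ry.index, ∑ m ∈ (r4 i n).index,
        (d (ry.left j ⊗ₜ[k] (rxr i).right n) ⊗ₜ[k] rx.left i) ⊗ₜ[k]
          (d (ry.right j ⊗ₜ[k] (r4 i n).right m) ⊗ₜ[k] (r4 i n).left m)
      = ∑ n ∈ (rxr i).index, ∑ m ∈ (r4 i n).index, ∑ j ∈ ry.index,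
        (d (ry.left j ⊗ₜ[k] (rxr i).right n) ⊗ₜ[k] rx.left i) ⊗ₜ[k]
          (d (ry.right j ⊗ₜ[k] (r4 i n).right m) ⊗ₜ[k] (r4 i n).left m) := by
    intro i _
    exact Finset.sum_congr rfl fun n _ => Finset.sum_comm
  rw [Finset.sum_congr rfl reorderR]
  exact C4

end HelpersG
section Final

open Coalgebra

theorem comulT_s {p g d : X ⊗[k] X →ₗ[k] X}
    (hp1 : Coalgebra.comul (R := k) ∘ₗ p = TensorProduct.map p p ∘ₗ comulTCop k X)
    (hd1 : Coalgebra.comul (R := k) ∘ₗ d = TensorProduct.map d d ∘ₗ comulTCop k X)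
    (hex : ExchangeId k X p d)
    (hg1 : p ∘ₗ Gmap k X g = cE k X) (hg2 : g ∘ₗ Gmap k X p = cE k X) :
    comulT k X ∘ₗ (TensorProduct.map (bOf k X g d) g ∘ₗ comulTcc k X) =
      TensorProduct.map (TensorProduct.map (bOf k X g d) g ∘ₗ comulTcc k X)
        (TensorProduct.map (bOf k X g d) g ∘ₗ comulTcc k X) ∘ₗ comulT k X := by
  set s := TensorProduct.map (bOf k X g d) g ∘ₗ comulTcc k X with hs
  have hinv : Gmap k X p ∘ₗ Gmap k X g = LinearMap.id := by
    rw [Gmap_comp, hg1, Gmap_cE]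
  have key : (comulT k X ∘ₗ s) ∘ₗ Gmap k X p =
      (TensorProduct.map s s ∘ₗ comulT k X) ∘ₗ Gmap k X p := by
    apply TensorProduct.ext'
    intro x y
    simp only [LinearMap.comp_apply]
    have h1 : s (Gmap k X p (x ⊗ₜ[k] y)) = Kmap k X d (x ⊗ₜ[k] y) := by
      rw [hs]
      exact LinearMap.congr_fun (claim1 k X hp1 hg2) (x ⊗ₜ[k] y)
    rw [h1]
    exact key_comul k X hp1 hd1 hex hg2 x y
  have E : comulT k X ∘ₗ s = ((comulT k X ∘ₗ s) ∘ₗ Gmap k X p) ∘ₗ Gmap k X g := by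
    rw [LinearMap.comp_assoc, hinv, LinearMap.comp_id]
  rw [E, key, LinearMap.comp_assoc, hinv, LinearMap.comp_id]

end Final

/-- the map `s (x⊗y) := ˣ⁽²⁾y₍₂₎ ⊗ x₍₁₎^(y₍₁₎)` associated with a left
regular q-magma coalgebra is a left non-degenerate coalgebra endomorphism of `X ⊗ X`. -/
theorem stmt_4 (p d g : X ⊗[k] X →ₗ[k] X)
    (hp : IsCoalgMorCop k X p) (hd : IsCoalgMorCop k X d) (hex : ExchangeId k X p d)
    (hg1 : p ∘ₗ Gmap k X g = cE k X) (hg2 : g ∘ₗ Gmap k X p = cE k X) :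
    IsCoalgEndo k X (TensorProduct.map (bOf k X g d) g ∘ₗ comulTcc k X) ∧
      LeftNonDeg k X (TensorProduct.map (bOf k X g d) g ∘ₗ comulTcc k X) := by
  obtain ⟨hp1, hp2⟩ := hp
  obtain ⟨hd1, hd2⟩ := hd
  have hg : Coalgebra.counit (R := k) ∘ₗ g = counitT k X := eps_g k X hp2 hg1
  have hb : Coalgebra.counit (R := k) ∘ₗ bOf k X g d = counitT k X := eps_b k X hd2 hg
  refine ⟨⟨comulT_s k X hp1 hd1 hex hg1 hg2, counitT_s k X hb hg⟩, ?_⟩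
  unfold LeftNonDeg
  rw [comp2_s k X hb]
  have h1 : Gmap k X g ∘ₗ Gmap k X p = LinearMap.id := by
    rw [Gmap_comp, hg2, Gmap_cE]
  have h2 : Gmap k X p ∘ₗ Gmap k X g = LinearMap.id := by
    rw [Gmap_comp, hg1, Gmap_cE]
  exact Function.bijective_iff_has_inverse.mpr
    ⟨⇑(Gmap k X p), fun a => LinearMap.congr_fun h2 a, fun a => LinearMap.congr_fun h1 a⟩

end
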